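/- arXiv:2406.07993 — 2 statements merged into one kernel-verified Lean document; each statement's English description precedes it below -/
import Mathlib

section
/- In the ARLOD model with learning rate α ∈ (0,1) and exploration rate ε ∈ (0,1) on a finite connected graph G, the probability that the system is not in consensus at time t tends to zero as t → ∞. -/
open MeasureTheory ProbabilityTheory
open scoped ENNReal

noncomputable section

/-- The preferred opinion of an agent with Q-values `q : Bool → ℝ` (`true` encodes
opinion `1`, `false` encodes opinion `-1`): the opinion with the larger Q-value
(opinion `1` in case of a tie). -/
def prefOf (q : Bool → ℝ) : Bool := if q false ≤ q true then true else false

/-- One round of the ARLOD model: agent `i` is selected and expresses an opinion to the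
selected neighbour `j` (its preferred opinion if the exploration flag `e` is `false`,
the other opinion if `e` is `true`); `j` responds honestly with reward `1` if the
expressed opinion is `j`'s preferred opinion and `-1` otherwise, and `i` updates the
Q-value of the expressed opinion by `Q ← (1−α)Q + αR`.  (If the sampled pair `(i,j)` is
not an edge of `G` — an event of probability zero — nothing happens.) -/
def arlodStep {N : ℕ} (G : SimpleGraph (Fin N)) [DecidableRel G.Adj] (α : ℝ)
    (q : Fin N → Bool → ℝ) (i j : Fin N) (e : Bool) : Fin N → Bool → ℝ :=
  if G.Adj i j then
    let expressed : Bool := if e then !(prefOf (q i)) else prefOf (q i)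
    let R : ℝ := if expressed = prefOf (q j) then 1 else -1
    fun v o => if v = i ∧ o = expressed then (1 - α) * q i expressed + α * R else q v o
  else q

namespace ARLOD

abbrev Move (N : ℕ) := Fin N × Fin N × Bool

variable {N : ℕ} (G : SimpleGraph (Fin N)) [DecidableRel G.Adj] (α : ℝ)

def step (q : Fin N → Bool → ℝ) (m : Move N) : Fin N → Bool → ℝ :=
  arlodStep G α q m.1 m.2.1 m.2.2

def run (q : Fin N → Bool → ℝ) (g : ℕ → Move N) : ℕ → Fin N → Bool → ℝ
  | 0 => q
  | t + 1 => step G α (run q g t) (g t)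

def Good (q : Fin N → Bool → ℝ) : Prop := ∀ v o, -1 ≤ q v o ∧ q v o ≤ 1

lemma prefOf_eq {q : Bool → ℝ} {o : Bool} (h : q (!o) < q o) : prefOf q = o := by
  cases o <;> simp_all [prefOf] <;> linarith

lemma run_congr {q : Fin N → Bool → ℝ} {g g' : ℕ → Move N} :
    ∀ t, (∀ s < t, g s = g' s) → run G α q g t = run G α q g' t
  | 0, _ => rfl
  | t + 1, h => by
      rw [run, run, run_congr t (fun s hs => h s (Nat.lt_succ_of_lt hs)),
        h t (Nat.lt_succ_self t)]

lemma run_add (q : Fin N → Bool → ℝ) (g : ℕ → Move N) (a : ℕ) :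
    ∀ b, run G α q g (a + b) = run G α (run G α q g a) (fun s => g (a + s)) b
  | 0 => rfl
  | b + 1 => by
      rw [← Nat.add_assoc, run, run, run_add q g a b]

def expr (q : Fin N → Bool → ℝ) (m : Move N) : Bool :=
  if m.2.2 then !prefOf (q m.1) else prefOf (q m.1)

def rew (q : Fin N → Bool → ℝ) (m : Move N) : ℝ :=
  if expr q m = prefOf (q m.2.1) then 1 else -1

lemma step_adj {q : Fin N → Bool → ℝ} {m : Move N} (h : G.Adj m.1 m.2.1) :
    step G α q m = fun v o => if v = m.1 ∧ o = expr q m then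
      (1 - α) * q m.1 (expr q m) + α * rew q m else q v o := by
  unfold step arlodStep expr rew
  rw [if_pos h]
  rfl

lemma step_not_adj {q : Fin N → Bool → ℝ} {m : Move N} (h : ¬ G.Adj m.1 m.2.1) :
    step G α q m = q := by
  unfold step arlodStep
  rw [if_neg h]

lemma rew_mem (q : Fin N → Bool → ℝ) (m : Move N) : -1 ≤ rew q m ∧ rew q m ≤ 1 := by
  unfold rew; split <;> norm_num

lemma step_good (hα : α ∈ Set.Ioo (0 : ℝ) 1) {q : Fin N → Bool → ℝ} (hq : Good q)
    (m : Move N) : Good (step G α q m) := by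
  intro v o
  by_cases h : G.Adj m.1 m.2.1
  · rw [step_adj G α h]
    dsimp only
    split
    · rcases hq m.1 (expr q m) with ⟨h1, h2⟩
      rcases rew_mem q m with ⟨h3, h4⟩
      obtain ⟨hα0, hα1⟩ := id hα
      constructor <;> nlinarith
    · exact hq v o
  · rw [step_not_adj G α h]; exact hq v o

lemma run_good (hα : α ∈ Set.Ioo (0 : ℝ) 1) {q : Fin N → Bool → ℝ} (hq : Good q)
    (g : ℕ → Move N) : ∀ t, Good (run G α q g t)
  | 0 => hq
  | t + 1 => step_good G α hα (run_good hα hq g t) (g t)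

lemma step_cons (hα : α ∈ Set.Ioo (0 : ℝ) 1) {q : Fin N → Bool → ℝ} {o : Bool}
    (hq : Good q) (hc : ∀ i, q i (!o) < q i o) (m : Move N) :
    ∀ i, step G α q m i (!o) < step G α q m i o := by
  intro i
  obtain ⟨hα0, hα1⟩ := id hα
  have hpj : prefOf (q m.2.1) = o := prefOf_eq (hc _)
  have hpi : prefOf (q m.1) = o := prefOf_eq (hc _)
  by_cases h : G.Adj m.1 m.2.1
  · rw [step_adj G α h]
    dsimp only
    rcases hq i (!o) with ⟨hio1, hio2⟩
    rcases hq i o with ⟨ho1, ho2⟩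
    have hci := hc i
    cases hm : m.2.2 <;> by_cases hi : i = m.1
    · -- e = false : expr = o, rew = 1
      have hexpr : expr q m = o := by unfold expr; rw [hm, hpi]; simp
      have hrew : rew q m = 1 := by unfold rew; rw [hexpr, hpj]; simp
      subst hi
      rw [hexpr, hrew]
      rw [if_neg (by simp), if_pos ⟨rfl, rfl⟩]
      nlinarith
    · have hexpr : expr q m = o := by unfold expr; rw [hm, hpi]; simp
      rw [if_neg (by tauto), if_neg (by tauto)]
      exact hci
    · -- e = true : expr = !o, rew = -1
      have hexpr : expr q m = !o := by unfold expr; rw [hm, hpi]; simp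
      have hrew : rew q m = -1 := by unfold rew; rw [hexpr, hpj]; simp
      subst hi
      rw [hexpr, hrew]
      rw [if_pos ⟨rfl, rfl⟩, if_neg (by simp)]
      nlinarith
    · rw [if_neg (by tauto), if_neg (by tauto)]
      exact hci
  · rw [step_not_adj G α h]; exact hc i

lemma exists_move {q : Fin N → Bool → ℝ} {u w : Fin N} (h : G.Adj u w) (b : Bool) :
    ∃ e : Bool, step G α q (u, w, e) = fun v o => if v = u ∧ o = b then
      (1 - α) * q u b + α * (if b = prefOf (q w) then 1 else -1) else q v o := by
  refine ⟨prefOf (q u) != b, ?_⟩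
  have hb : expr q (u, w, (prefOf (q u) != b)) = b := by
    unfold expr; cases hp : prefOf (q u) <;> cases b <;> simp [hp]
  have hr : rew q (u, w, (prefOf (q u) != b)) = if b = prefOf (q w) then 1 else -1 := by
    unfold rew; rw [hb]
  rw [step_adj G α (m := (u, w, prefOf (q u) != b)) h, hb, hr]

lemma push (hα : α ∈ Set.Ioo (0 : ℝ) 1) {u w : Fin N} (h : G.Adj u w) (b : Bool)
    (q : Fin N → Bool → ℝ) (k : ℕ) :
    ∃ g : ℕ → Move N, (∀ r, (g r).1 = u ∧ (g r).2.1 = w) ∧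
      run G α q g k = fun v o => if v = u ∧ o = b then
        (1 - α) ^ k * q u b + (1 - (1 - α) ^ k) * (if b = prefOf (q w) then 1 else -1)
      else q v o := by
  induction k with
  | zero =>
    refine ⟨fun _ => (u, w, false), fun r => ⟨rfl, rfl⟩, ?_⟩
    funext v o
    show q v o = _
    by_cases hc : v = u ∧ o = b
    · obtain ⟨rfl, rfl⟩ := hc
      rw [if_pos ⟨rfl, rfl⟩, pow_zero]
      ring
    · rw [if_neg hc]
  | succ k ih =>
    obtain ⟨g, hgv, hrun⟩ := ih
    have hw : run G α q g k w = q w := by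
      funext o
      rw [hrun]
      dsimp only
      rw [if_neg]
      rintro ⟨h1, -⟩
      exact G.ne_of_adj h h1.symm
    obtain ⟨e, he⟩ := exists_move G α (q := run G α q g k) h b
    refine ⟨fun r => if r = k then (u, w, e) else g r, ?_, ?_⟩
    · intro r
      dsimp only
      split
      · exact ⟨rfl, rfl⟩
      · exact hgv r
    · have hcong : run G α q (fun r => if r = k then (u, w, e) else g r) k
          = run G α q g k := by
        refine run_congr G α k (fun s hs => ?_)
        rw [if_neg (Nat.ne_of_lt hs)]
      rw [run, hcong, if_pos rfl, he]
      funext v o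
      by_cases hc : v = u ∧ o = b
      · obtain ⟨rfl, rfl⟩ := hc
        have e1 : run G α q g k v o
            = (1 - α) ^ k * q v o
              + (1 - (1 - α) ^ k) * (if o = prefOf (q w) then 1 else -1) := by
          rw [hrun]; dsimp only; rw [if_pos ⟨rfl, rfl⟩]
        rw [if_pos (⟨rfl, rfl⟩ : v = v ∧ o = o), if_pos (⟨rfl, rfl⟩ : v = v ∧ o = o),
          hw, e1]
        ring
      · rw [if_neg hc, if_neg hc, hrun]
        dsimp only
        rw [if_neg hc]

lemma convert (hα : α ∈ Set.Ioo (0 : ℝ) 1) {u w : Fin N} (h : G.Adj u w)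
    {q : Fin N → Bool → ℝ} (hq : Good q) {k : ℕ} (hk : (1 - α) ^ k < 1 / 2) :
    ∃ g : ℕ → Move N, (∀ r, (g r).1 = u ∧ (g r).2.1 = w) ∧
      (∀ v, v ≠ u → run G α q g (2 * k) v = q v) ∧
      run G α q g (2 * k) u (!(prefOf (q w))) < 0 ∧
      0 < run G α q g (2 * k) u (prefOf (q w)) := by
  have hβ0 : (0 : ℝ) ≤ (1 - α) ^ k := by
    apply pow_nonneg; linarith [hα.2]
  set o := prefOf (q w) with ho
  obtain ⟨g1, hg1v, hrun1⟩ := push G α hα h o q k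
  set q1 := run G α q g1 k with hq1
  obtain ⟨g2, hg2v, hrun2⟩ := push G α hα h (!o) q1 k
  have hne : w ≠ u := fun hh => G.ne_of_adj h hh.symm
  have hq1w : q1 w = q w := by
    funext o'
    rw [hrun1]
    dsimp only
    rw [if_neg (fun hc => hne hc.1)]
  have hpq1w : prefOf (q1 w) = o := by rw [hq1w]
  have hR2 : (if (!o) = prefOf (q1 w) then (1:ℝ) else -1) = -1 := by
    rw [hpq1w]; simp
  have hq1uno : q1 u (!o) = q u (!o) := by
    rw [hrun1]
    dsimp only
    rw [if_neg (by simp)]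
  have hq1uo : q1 u o = (1 - α) ^ k * q u o + (1 - (1 - α) ^ k) := by
    rw [hrun1]
    dsimp only
    rw [if_pos ⟨rfl, rfl⟩, if_pos ho.symm.symm]
    ring
  set g : ℕ → Move N := fun r => if r < k then g1 r else g2 (r - k) with hgdef
  have htot : run G α q g (2 * k) = run G α q1 g2 k := by
    have h2k : 2 * k = k + k := by ring
    rw [h2k, run_add]
    have e1 : run G α q g k = q1 := by
      rw [hq1]
      refine run_congr G α k (fun s hs => ?_)
      rw [hgdef]
      dsimp only
      rw [if_pos hs]
    rw [e1]
    refine run_congr G α k (fun s hs => ?_)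
    rw [hgdef]
    dsimp only
    rw [if_neg (by omega), Nat.add_sub_cancel_left]
  refine ⟨g, fun r => ?_, ?_, ?_, ?_⟩
  · rw [hgdef]; dsimp only; split
    · exact hg1v r
    · exact hg2v (r - k)
  · intro v hv
    funext o'
    rw [htot, hrun2]
    dsimp only
    rw [if_neg (fun hc => hv hc.1), hrun1]
    dsimp only
    rw [if_neg (fun hc => hv hc.1)]
  · rw [htot, hrun2]
    dsimp only
    rw [if_pos ⟨rfl, rfl⟩, hR2, hq1uno]
    rcases hq u (!o) with ⟨h1, h2⟩
    nlinarith
  · rw [htot, hrun2]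
    dsimp only
    rw [if_neg (by simp), hq1uo]
    rcases hq u o with ⟨h1, h2⟩
    nlinarith

lemma run_glue (q : Fin N → Bool → ℝ) (g1 g2 : ℕ → Move N) (a b : ℕ) :
    run G α q (fun r => if r < a then g1 r else g2 (r - a)) (a + b)
      = run G α (run G α q g1 a) g2 b := by
  rw [run_add]
  have e1 : run G α q (fun r => if r < a then g1 r else g2 (r - a)) a
      = run G α q g1 a := run_congr G α a (fun s hs => if_pos hs)
  rw [e1]
  refine run_congr G α b (fun s hs => ?_)
  rw [if_neg (by omega), Nat.add_sub_cancel_left]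

lemma walk_cross {C : Finset (Fin N)} :
    ∀ {a b : Fin N}, G.Walk a b → a ∈ C → b ∉ C →
      ∃ u w, u ∉ C ∧ w ∈ C ∧ G.Adj u w := by
  intro a b p
  induction p with
  | nil => intro ha hb; exact absurd ha hb
  | cons hadj p ih =>
    rename_i x y z
    intro ha hb
    by_cases hy : y ∈ C
    · exact ih hy hb
    · exact ⟨y, x, hy, ha, hadj.symm⟩

lemma exists_adj (hGc : G.Connected) (hN2 : 2 ≤ N) (v : Fin N) : ∃ w, G.Adj v w := by
  have hnt : Nontrivial (Fin N) := Fin.nontrivial_iff_two_le.mpr hN2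
  obtain ⟨u, hu⟩ := exists_ne v
  obtain ⟨p⟩ := hGc.preconnected v u
  cases p with
  | nil => exact absurd rfl hu.symm
  | cons hadj _ => exact ⟨_, hadj⟩

lemma drive_all (hα : α ∈ Set.Ioo (0 : ℝ) 1) (hGc : G.Connected) {k : ℕ}
    (hk : (1 - α) ^ k < 1 / 2) (o : Bool) :
    ∀ (n : ℕ) (C : Finset (Fin N)) (q : Fin N → Bool → ℝ), Good q → C.Nonempty →
      (Finset.univ \ C).card = n →
      (∀ v ∈ C, q v (!o) < 0 ∧ 0 < q v o) →
      ∃ g : ℕ → Move N, (∀ r < 2 * k * n, G.Adj (g r).1 (g r).2.1) ∧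
        ∀ v, run G α q g (2 * k * n) v (!o) < 0 ∧ 0 < run G α q g (2 * k * n) v o := by
  intro n
  induction n with
  | zero =>
    intro C q hq hCne hcard hconv
    have hCuniv : ∀ v : Fin N, v ∈ C := by
      intro v
      by_contra hv
      have hm : v ∈ Finset.univ \ C := Finset.mem_sdiff.2 ⟨Finset.mem_univ v, hv⟩
      rw [Finset.card_eq_zero] at hcard
      simp [hcard] at hm
    obtain ⟨u0, -⟩ := hCne
    exact ⟨fun _ => (u0, u0, false), fun r hr => absurd hr (by simp),
      fun v => hconv v (hCuniv v)⟩
  | succ n ih =>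
    intro C q hq hCne hcard hconv
    have hex : ∃ b, b ∈ Finset.univ \ C := Finset.card_pos.1 (by omega)
    obtain ⟨b, hb⟩ := hex
    have hbC : b ∉ C := (Finset.mem_sdiff.1 hb).2
    obtain ⟨a, haC⟩ := hCne
    obtain ⟨p⟩ := hGc.preconnected a b
    obtain ⟨u, w, huC, hwC, huw⟩ := walk_cross G p haC hbC
    have hpw : prefOf (q w) = o := prefOf_eq (by
      rcases hconv w hwC with ⟨h1, h2⟩; linarith)
    obtain ⟨g1, hg1v, hg1un, hg1no, hg1o⟩ := convert G α hα huw hq hk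
    rw [hpw] at hg1no hg1o
    set q1 := run G α q g1 (2 * k) with hq1def
    have hq1 : Good q1 := run_good G α hα hq g1 (2 * k)
    have hconv' : ∀ v ∈ insert u C, q1 v (!o) < 0 ∧ 0 < q1 v o := by
      intro v hv
      rcases Finset.mem_insert.1 hv with rfl | hvC
      · exact ⟨hg1no, hg1o⟩
      · rw [hg1un v (fun hh => huC (hh ▸ hvC))]
        exact hconv v hvC
    have hcard' : (Finset.univ \ insert u C).card = n := by
      have he : Finset.univ \ insert u C = (Finset.univ \ C).erase u := by
        ext x
        simp only [Finset.mem_sdiff, Finset.mem_insert, Finset.mem_erase,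
          Finset.mem_univ, true_and]
        tauto
      rw [he, Finset.card_erase_of_mem (Finset.mem_sdiff.2 ⟨Finset.mem_univ u, huC⟩),
        hcard]
      omega
    obtain ⟨g2, hg2v, hg2conv⟩ := ih (insert u C) q1 hq1
      ⟨u, Finset.mem_insert_self u C⟩ hcard' hconv'
    have harr : 2 * k * (n + 1) = 2 * k + 2 * k * n := by ring
    refine ⟨fun r => if r < 2 * k then g1 r else g2 (r - 2 * k), ?_, ?_⟩
    · intro r hr
      dsimp only
      split
      · rcases hg1v r with ⟨e1, e2⟩
        rw [e1, e2]
        exact huw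
      · rw [harr] at hr
        exact hg2v (r - 2 * k) (by omega)
    · intro v
      rw [harr, run_glue, ← hq1def]
      exact hg2conv v

lemma exists_drive (hα : α ∈ Set.Ioo (0 : ℝ) 1) (hGc : G.Connected) (hN2 : 2 ≤ N)
    {k : ℕ} (hk : (1 - α) ^ k < 1 / 2) (q : Fin N → Bool → ℝ) (hq : Good q) :
    ∃ g : ℕ → Move N, (∀ r < 2 * k * N, G.Adj (g r).1 (g r).2.1) ∧
      ∃ o : Bool, ∀ i, run G α q g (2 * k * N) i (!o) < run G α q g (2 * k * N) i o := by
  have hN0 : 0 < N := by omega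
  set v0 : Fin N := ⟨0, hN0⟩ with hv0
  obtain ⟨w0, hvw⟩ := exists_adj G hGc hN2 v0
  set o := prefOf (q w0) with hodef
  obtain ⟨g1, hg1v, hg1un, hg1no, hg1o⟩ := convert G α hα hvw hq hk
  rw [← hodef] at hg1no hg1o
  set q1 := run G α q g1 (2 * k) with hq1def
  have hq1 : Good q1 := run_good G α hα hq g1 (2 * k)
  have hconv : ∀ v ∈ ({v0} : Finset (Fin N)), q1 v (!o) < 0 ∧ 0 < q1 v o := by
    intro v hv
    rw [Finset.mem_singleton] at hv
    subst hv
    exact ⟨hg1no, hg1o⟩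
  have hcard : (Finset.univ \ ({v0} : Finset (Fin N))).card = N - 1 := by
    rw [Finset.card_sdiff_of_subset (Finset.subset_univ _), Finset.card_univ, Fintype.card_fin,
      Finset.card_singleton]
  obtain ⟨g2, hg2v, hg2conv⟩ := drive_all G α hα hGc hk o (N - 1) {v0} q1 hq1
    ⟨v0, Finset.mem_singleton_self v0⟩ hcard hconv
  have harr : 2 * k * N = 2 * k + 2 * k * (N - 1) := by
    have hN1 : N - 1 + 1 = N := by omega
    calc 2 * k * N = 2 * k * ((N - 1) + 1) := by rw [hN1]
    _ = 2 * k + 2 * k * (N - 1) := by ring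
  refine ⟨fun r => if r < 2 * k then g1 r else g2 (r - 2 * k), ?_, o, ?_⟩
  · intro r hr
    dsimp only
    split
    · rcases hg1v r with ⟨e1, e2⟩
      rw [e1, e2]
      exact hvw
    · rw [harr] at hr
      exact hg2v (r - 2 * k) (by omega)
  · intro i
    rw [harr, run_glue, ← hq1def]
    rcases hg2conv i with ⟨h1, h2⟩
    linarith

end ARLOD

/-- In the ARLOD model with learning rate `α ∈ (0,1)` and exploration rate
`ε ∈ (0,1)` on a finite connected graph `G`, the probability that the system is not in
consensus at time `t` tends to zero as `t → ∞`. -/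
theorem stmt4 {N : ℕ} (hN : 0 < N) (G : SimpleGraph (Fin N)) [DecidableRel G.Adj]
    (hG : G.Connected) (α ε : ℝ) (hα : α ∈ Set.Ioo (0 : ℝ) 1) (hε : ε ∈ Set.Ioo (0 : ℝ) 1)
    {Ω : Type*} [MeasurableSpace Ω] (P : Measure Ω) [IsProbabilityMeasure P]
    (A J : ℕ → Ω → Fin N) (X : ℕ → Ω → Bool)
    (hmeas : ∀ t : ℕ, Measurable (fun ω => (A t ω, J t ω, X t ω)))
    (hindep : iIndepFun (fun t ω => (A t ω, J t ω, X t ω)) P)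
    (hlaw : ∀ (t : ℕ) (i j : Fin N) (e : Bool),
      P {ω | (A t ω, J t ω, X t ω) = (i, j, e)} =
        ENNReal.ofReal ((1 / (N : ℝ)) * (if G.Adj i j then 1 / (G.degree i : ℝ) else 0) *
          (if e then ε else 1 - ε)))
    (Q : ℕ → Ω → Fin N → Bool → ℝ) (q0 : Fin N → Bool → ℝ)
    (hQ0 : ∀ ω, Q 0 ω = q0) (hq0mem : ∀ i o, q0 i o ∈ Set.Icc (-1 : ℝ) 1)
    (hdyn : ∀ (t : ℕ) (ω : Ω),
      Q (t + 1) ω = arlodStep G α (Q t ω) (A t ω) (J t ω) (X t ω)) :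
    Filter.Tendsto (fun t : ℕ => P {ω | ¬ ∃ o : Bool, ∀ i, Q t ω i (!o) < Q t ω i o})
      Filter.atTop (nhds 0) := by
  classical
  obtain ⟨hα0, hα1⟩ := id hα
  obtain ⟨hε0, hε1⟩ := id hε
  set M : ℕ → Ω → ARLOD.Move N := fun t ω => (A t ω, J t ω, X t ω) with hMdef
  have hM : ∀ t, Measurable (M t) := hmeas
  set π : ARLOD.Move N → ℝ≥0∞ := fun m =>
    ENNReal.ofReal ((1 / (N : ℝ)) * (if G.Adj m.1 m.2.1 then 1 / (G.degree m.1 : ℝ) else 0) *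
      (if m.2.2 then ε else 1 - ε)) with hπdef
  have hlawM : ∀ (t : ℕ) (m : ARLOD.Move N), P {ω | M t ω = m} = π m := by
    rintro t ⟨i, j, e⟩
    exact hlaw t i j e
  rcases Nat.lt_or_ge N 2 with hNlt | hN2
  · -- N = 1: the law sums to zero, contradiction with P being a probability measure
    exfalso
    have hsum : (1 : ℝ≥0∞) ≤ ∑ m : ARLOD.Move N, P {ω | M 0 ω = m} := by
      have hcov : (Set.univ : Set Ω) ⊆
          ⋃ m ∈ (Finset.univ : Finset (ARLOD.Move N)), {ω | M 0 ω = m} := by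
        intro ω _
        exact Set.mem_biUnion (Finset.mem_univ (M 0 ω)) rfl
      calc (1 : ℝ≥0∞) = P Set.univ := measure_univ.symm
      _ ≤ P (⋃ m ∈ (Finset.univ : Finset (ARLOD.Move N)), {ω | M 0 ω = m}) :=
        measure_mono hcov
      _ ≤ ∑ m : ARLOD.Move N, P {ω | M 0 ω = m} := measure_biUnion_finset_le _ _
    have hzero : ∀ m : ARLOD.Move N, P {ω | M 0 ω = m} = 0 := by
      intro m
      rw [hlawM 0 m, hπdef]
      have hma : ¬ G.Adj m.1 m.2.1 := by
        have hN1 : N = 1 := by omega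
        subst hN1
        have : m.1 = m.2.1 := Subsingleton.elim _ _
        rw [this]
        exact G.irrefl
      simp [hma]
    rw [Finset.sum_congr rfl (fun m _ => hzero m)] at hsum
    simp at hsum
  -- main case : N ≥ 2
  obtain ⟨k, hk⟩ : ∃ k : ℕ, (1 - α) ^ k < 1 / 2 :=
    exists_pow_lt_of_lt_one (by norm_num) (by linarith)
  have hk0 : k ≠ 0 := by
    intro h0
    rw [h0, pow_zero] at hk
    norm_num at hk
  set T := 2 * k * N with hTdef
  have hT : 0 < T :=
    Nat.mul_pos (Nat.mul_pos (by norm_num) (Nat.pos_of_ne_zero hk0)) (by omega)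
  have hGood0 : ARLOD.Good q0 := fun v o => hq0mem v o
  have hQrun : ∀ t ω, Q t ω = ARLOD.run G α q0 (fun s => M s ω) t := by
    intro t
    induction t with
    | zero => intro ω; rw [hQ0 ω]; rfl
    | succ t ih => intro ω; rw [hdyn t ω, ih ω]; rfl
  set Bt : ℕ → Set Ω := fun t => {ω | ¬ ∃ o : Bool, ∀ i,
    ARLOD.run G α q0 (fun s => M s ω) t i (!o) <
      ARLOD.run G α q0 (fun s => M s ω) t i o} with hBtdef
  have hgoal : (fun t : ℕ => P {ω | ¬ ∃ o : Bool, ∀ i, Q t ω i (!o) < Q t ω i o})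
      = fun t => P (Bt t) := by
    funext t
    congr 1
    ext ω
    simp only [hBtdef, Set.mem_setOf_eq, hQrun]
  rw [hgoal]
  -- absorption
  have hBtmono : ∀ t, Bt (t + 1) ⊆ Bt t := by
    intro t ω hω hcons
    obtain ⟨o, ho⟩ := hcons
    exact hω ⟨o, ARLOD.step_cons G α hα
      (ARLOD.run_good G α hα hGood0 (fun s => M s ω) t) ho (M t ω)⟩
  have hBtle : ∀ {a b : ℕ}, a ≤ b → Bt b ⊆ Bt a := by
    intro a b hab
    induction hab with
    | refl => exact Set.Subset.refl _
    | step _ ih => exact (hBtmono _).trans ih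
  -- lower bound on single-move probabilities
  set c : ℝ := (1 / (N : ℝ)) * (1 / (N : ℝ)) * min ε (1 - ε) with hcdef
  have hNR : (0 : ℝ) < N := by
    have : (2 : ℝ) ≤ N := by exact_mod_cast hN2
    linarith
  have hcpos : 0 < c := by
    apply mul_pos (mul_pos (by positivity) (by positivity))
    exact lt_min hε0 (by linarith)
  have hc1 : c ≤ 1 := by
    have hN1R : (1 : ℝ) ≤ (N : ℝ) := by exact_mod_cast hN
    have h1N : 1 / (N : ℝ) ≤ 1 := by
      rw [div_le_one hNR]
      exact hN1R
    have hmin : min ε (1 - ε) ≤ 1 := le_trans (min_le_left _ _) (by linarith)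
    have h0N : (0 : ℝ) ≤ 1 / (N : ℝ) := by positivity
    have h0m : (0 : ℝ) ≤ min ε (1 - ε) := le_of_lt (lt_min hε0 (by linarith))
    calc c ≤ 1 * 1 * 1 := by
          apply mul_le_mul (mul_le_mul h1N h1N h0N (by norm_num)) hmin h0m (by norm_num)
    _ = 1 := by norm_num
  set δ : ℝ≥0∞ := (ENNReal.ofReal c) ^ T with hδdef
  have hδ0 : δ ≠ 0 := pow_ne_zero _ (ENNReal.ofReal_pos.2 hcpos).ne'
  have hπge : ∀ m : ARLOD.Move N, G.Adj m.1 m.2.1 → ENNReal.ofReal c ≤ π m := by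
    intro m hadj
    rw [hπdef, hcdef]
    apply ENNReal.ofReal_le_ofReal
    rw [if_pos hadj]
    have hdegpos : 0 < G.degree m.1 := (G.degree_pos_iff_exists_adj m.1).2 ⟨_, hadj⟩
    have hdegR : (0 : ℝ) < (G.degree m.1 : ℝ) := by exact_mod_cast hdegpos
    have hdegN : (G.degree m.1 : ℝ) ≤ N := by
      have := G.degree_lt_card_verts m.1
      rw [Fintype.card_fin] at this
      exact_mod_cast this.le
    have h2 : 1 / (N : ℝ) ≤ 1 / (G.degree m.1 : ℝ) :=
      one_div_le_one_div_of_le hdegR hdegN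
    have h3 : min ε (1 - ε) ≤ (if m.2.2 then ε else 1 - ε) := by
      split
      · exact min_le_left _ _
      · exact min_le_right _ _
    have h0N : (0 : ℝ) ≤ 1 / (N : ℝ) := by positivity
    have h0m : (0 : ℝ) ≤ min ε (1 - ε) := le_of_lt (lt_min hε0 (by linarith))
    apply mul_le_mul (mul_le_mul le_rfl h2 h0N h0N) h3 h0m
    positivity
  -- cylinders
  set Cyl : (n : ℕ) → (ℕ → ARLOD.Move N) → Set Ω :=
    fun n g => ⋂ s ∈ Finset.range n, (M s) ⁻¹' {g s} with hCyldef
  have hCylMeas : ∀ n g, MeasurableSet (Cyl n g) := fun n g =>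
    Finset.measurableSet_biInter _ (fun s _ => hM s (measurableSet_singleton _))
  have hCylP : ∀ n g, P (Cyl n g) = ∏ s ∈ Finset.range n, π (g s) := by
    intro n g
    have h1 := hindep.measure_inter_preimage_eq_mul (Finset.range n)
      (sets := fun s => ({g s} : Set (ARLOD.Move N))) (fun i _ => measurableSet_singleton _)
    rw [hCyldef]
    dsimp only
    rw [h1]
    exact Finset.prod_congr rfl (fun s _ => hlawM s (g s))
  have hCylmem : ∀ n g ω, ω ∈ Cyl n g ↔ ∀ s < n, M s ω = g s := by
    intro n g ω
    rw [hCyldef]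
    simp only [Set.mem_iInter, Set.mem_preimage, Set.mem_singleton_iff, Finset.mem_range]
  -- a default move
  set m0 : ARLOD.Move N := (⟨0, by omega⟩, ⟨0, by omega⟩, false) with hm0def
  -- prefix extension
  set extv : (n : ℕ) → (Fin n → ARLOD.Move N) → ℕ → ARLOD.Move N :=
    fun n v s => if h : s < n then v ⟨s, h⟩ else m0 with hextvdef
  have hextlt : ∀ (n : ℕ) (v : Fin n → ARLOD.Move N) (s : ℕ) (hs : s < n),
      extv n v s = v ⟨s, hs⟩ := by
    intro n v s hs
    rw [hextvdef]
    exact dif_pos hs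
  -- driving sequences
  have hfex : ∃ f : (Fin N → Bool → ℝ) → ℕ → ARLOD.Move N,
      ∀ q : Fin N → Bool → ℝ, ARLOD.Good q →
        (∀ r < T, G.Adj ((f q) r).1 ((f q) r).2.1) ∧
        ∃ o : Bool, ∀ i, ARLOD.run G α q (f q) T i (!o) < ARLOD.run G α q (f q) T i o := by
    have hx : ∀ q : Fin N → Bool → ℝ, ∃ g : ℕ → ARLOD.Move N, ARLOD.Good q →
        (∀ r < T, G.Adj (g r).1 (g r).2.1) ∧
        ∃ o : Bool, ∀ i, ARLOD.run G α q g T i (!o) < ARLOD.run G α q g T i o := by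
      intro q
      by_cases hq : ARLOD.Good q
      · obtain ⟨g, h1, h2⟩ := ARLOD.exists_drive G α hα hG hN2 hk q hq
        exact ⟨g, fun _ => ⟨h1, h2⟩⟩
      · exact ⟨fun _ => m0, fun h => absurd h hq⟩
    choose f hf using hx
    exact ⟨f, hf⟩
  obtain ⟨f, hf⟩ := hfex
  -- the key contraction estimate
  have hkey : ∀ n : ℕ, P (Bt (n + T)) ≤ (1 - δ) * P (Bt n) := by
    intro n
    set st : (Fin n → ARLOD.Move N) → (Fin N → Bool → ℝ) :=
      fun v => ARLOD.run G α q0 (extv n v) n with hstdef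
    have hstGood : ∀ v, ARLOD.Good (st v) := fun v =>
      ARLOD.run_good G α hα hGood0 (extv n v) n
    set BadV : Finset (Fin n → ARLOD.Move N) :=
      Finset.univ.filter (fun v => ¬ ∃ o : Bool, ∀ i, st v i (!o) < st v i o) with hBadVdef
    set glue : (Fin n → ARLOD.Move N) → ℕ → ARLOD.Move N :=
      fun v s => if h : s < n then v ⟨s, h⟩ else f (st v) (s - n) with hgluedef
    have hglue_lt : ∀ v (s : ℕ), s < n → glue v s = extv n v s := by
      intro v s hs
      rw [hgluedef, hextvdef]
      dsimp only
      rw [dif_pos hs, dif_pos hs]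
    have hglue_ge : ∀ v (r : ℕ), glue v (n + r) = f (st v) r := by
      intro v r
      rw [hgluedef]
      dsimp only
      rw [dif_neg (by omega), Nat.add_sub_cancel_left]
    -- state of an ω-prefix
    have hstM : ∀ ω, ARLOD.run G α q0 (fun s => M s ω) n = st (fun s : Fin n => M s ω) := by
      intro ω
      rw [hstdef]
      exact ARLOD.run_congr G α n
        (fun s hs => (hextlt n (fun s' : Fin n => M (↑s') ω) s hs).symm)
    have hmemBadV : ∀ ω, ω ∈ Bt n → (fun s : Fin n => M s ω) ∈ BadV := by
      intro ω hω
      rw [hBadVdef]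
      refine Finset.mem_filter.2 ⟨Finset.mem_univ _, ?_⟩
      rw [← hstM ω]
      exact hω
    have hmemCyl : ∀ ω, ω ∈ Cyl n (extv n (fun s : Fin n => M s ω)) := by
      intro ω
      rw [hCylmem]
      intro s hs
      exact (hextlt n (fun s' : Fin n => M (↑s') ω) s hs).symm
    -- Bt n as a disjoint union of cylinders
    have hBtn : Bt n = ⋃ v ∈ BadV, Cyl n (extv n v) := by
      ext ω
      constructor
      · intro hω
        exact Set.mem_biUnion (hmemBadV ω hω) (hmemCyl ω)
      · intro hω
        obtain ⟨v, hv, hcyl⟩ := Set.mem_iUnion₂.1 hω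
        rw [hBadVdef] at hv
        have hbad := (Finset.mem_filter.1 hv).2
        have hrun : ARLOD.run G α q0 (fun s => M s ω) n = st v := by
          rw [hstdef]
          exact ARLOD.run_congr G α n (fun s hs => (hCylmem n _ ω).1 hcyl s hs)
        show ¬ _
        rw [hrun]
        exact hbad
    have hdisjU : (↑BadV : Set (Fin n → ARLOD.Move N)).PairwiseDisjoint
        (fun v => Cyl n (extv n v)) := by
      intro v _ w _ hvw
      refine Set.disjoint_left.2 fun ω hv hw => hvw ?_
      funext s
      have h1 : M s.1 ω = extv n v s.1 := (hCylmem n _ ω).1 hv s.1 s.2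
      have h2 : M s.1 ω = extv n w s.1 := (hCylmem n _ ω).1 hw s.1 s.2
      have e1 : extv n v s.1 = v ⟨s.1, s.2⟩ := hextlt n v s.1 s.2
      have e2 : extv n w s.1 = w ⟨s.1, s.2⟩ := hextlt n w s.1 s.2
      exact ((h1.trans e1).symm.trans (h2.trans e2) : v ⟨s.1, s.2⟩ = w ⟨s.1, s.2⟩)
    have hPBtn : P (Bt n) = ∑ v ∈ BadV, P (Cyl n (extv n v)) := by
      rw [hBtn]
      exact measure_biUnion_finset hdisjU (fun v _ => hCylMeas n _)
    -- the bad set at time n + T avoids the driving blocks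
    have hsub2 : Bt (n + T) ⊆ ⋃ v ∈ BadV, (Cyl n (extv n v) \ Cyl (n + T) (glue v)) := by
      intro ω hω
      have hωn : ω ∈ Bt n := hBtle (Nat.le_add_right n T) hω
      refine Set.mem_biUnion (hmemBadV ω hωn) ⟨hmemCyl ω, ?_⟩
      intro hmem
      set v : Fin n → ARLOD.Move N := fun s => M s ω with hvdef
      have hall := (hCylmem (n + T) (glue v) ω).1 hmem
      have hrun : ARLOD.run G α q0 (fun s => M s ω) (n + T)
          = ARLOD.run G α (st v) (f (st v)) T := by
        rw [ARLOD.run_congr G α (n + T) (g' := glue v) hall, ARLOD.run_add]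
        have e1 : ARLOD.run G α q0 (glue v) n = st v := by
          rw [hstdef]
          refine ARLOD.run_congr G α n (fun s hs => hglue_lt v s hs)
        rw [e1]
        refine ARLOD.run_congr G α T (fun s hs => hglue_ge v s)
      obtain ⟨o, ho⟩ := (hf (st v) (hstGood v)).2
      refine hω ⟨o, fun i => ?_⟩
      rw [hrun]
      exact ho i
    -- measure computation
    have hperv : ∀ v ∈ BadV, P (Cyl n (extv n v) \ Cyl (n + T) (glue v))
        ≤ (1 - δ) * P (Cyl n (extv n v)) := by
      intro v _
      have hss : Cyl (n + T) (glue v) ⊆ Cyl n (extv n v) := by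
        intro ω hω
        rw [hCylmem]
        intro s hs
        rw [← hglue_lt v s hs]
        exact (hCylmem (n + T) (glue v) ω).1 hω s (by omega)
      have h1 : ∏ s ∈ Finset.range n, π (glue v s) = P (Cyl n (extv n v)) := by
        rw [hCylP]
        exact Finset.prod_congr rfl (fun s hs => by
          rw [hglue_lt v s (Finset.mem_range.1 hs)])
      have h2 : δ ≤ ∏ r ∈ Finset.range T, π (glue v (n + r)) := by
        rw [hδdef]
        calc (ENNReal.ofReal c) ^ T
            = ∏ _r ∈ Finset.range T, ENNReal.ofReal c := by
              rw [Finset.prod_const, Finset.card_range]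
        _ ≤ ∏ r ∈ Finset.range T, π (glue v (n + r)) := by
              refine Finset.prod_le_prod' (fun r hr => ?_)
              rw [hglue_ge v r]
              exact hπge _ ((hf (st v) (hstGood v)).1 r (Finset.mem_range.1 hr))
      have hPglue : δ * P (Cyl n (extv n v)) ≤ P (Cyl (n + T) (glue v)) := by
        calc δ * P (Cyl n (extv n v))
            ≤ (∏ r ∈ Finset.range T, π (glue v (n + r))) * P (Cyl n (extv n v)) :=
              mul_le_mul_left h2 _
        _ = P (Cyl (n + T) (glue v)) := by
              rw [hCylP (n + T) (glue v), Finset.prod_range_add, h1]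
              exact mul_comm _ _
      calc P (Cyl n (extv n v) \ Cyl (n + T) (glue v))
          = P (Cyl n (extv n v)) - P (Cyl (n + T) (glue v)) :=
            measure_diff hss (hCylMeas _ _).nullMeasurableSet (measure_ne_top P _)
      _ ≤ P (Cyl n (extv n v)) - δ * P (Cyl n (extv n v)) := tsub_le_tsub_left hPglue _
      _ = (1 - δ) * P (Cyl n (extv n v)) := by
            rw [ENNReal.sub_mul (fun _ _ => measure_ne_top P _), one_mul]
    calc P (Bt (n + T)) ≤ P (⋃ v ∈ BadV, (Cyl n (extv n v) \ Cyl (n + T) (glue v))) :=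
          measure_mono hsub2
    _ ≤ ∑ v ∈ BadV, P (Cyl n (extv n v) \ Cyl (n + T) (glue v)) :=
          measure_biUnion_finset_le _ _
    _ ≤ ∑ v ∈ BadV, (1 - δ) * P (Cyl n (extv n v)) := Finset.sum_le_sum hperv
    _ = (1 - δ) * P (Bt n) := by rw [← Finset.mul_sum, hPBtn]
  -- iterate the contraction
  have hiter : ∀ j : ℕ, P (Bt (T * j)) ≤ (1 - δ) ^ j := by
    intro j
    induction j with
    | zero => simpa using prob_le_one
    | succ j ih =>
      have harr : T * (j + 1) = T * j + T := by ring
      calc P (Bt (T * (j + 1))) = P (Bt (T * j + T)) := by rw [harr]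
      _ ≤ (1 - δ) * P (Bt (T * j)) := hkey (T * j)
      _ ≤ (1 - δ) * (1 - δ) ^ j := mul_le_mul_right ih _
      _ = (1 - δ) ^ (j + 1) := by rw [pow_succ, mul_comm]
  have hbound : ∀ t : ℕ, P (Bt t) ≤ (1 - δ) ^ (t / T) := by
    intro t
    have hle : T * (t / T) ≤ t := by
      rw [Nat.mul_comm]
      exact Nat.div_mul_le_self t T
    calc P (Bt t) ≤ P (Bt (T * (t / T))) := measure_mono (hBtle hle)
    _ ≤ (1 - δ) ^ (t / T) := hiter _
  -- pass to the limit
  have h1δ : (1 - δ) < 1 := ENNReal.sub_lt_self ENNReal.one_ne_top one_ne_zero hδ0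
  have hpow : Filter.Tendsto (fun j : ℕ => (1 - δ) ^ j) Filter.atTop (nhds 0) :=
    ENNReal.tendsto_pow_atTop_nhds_zero_of_lt_one h1δ
  have hdiv : Filter.Tendsto (fun t : ℕ => t / T) Filter.atTop Filter.atTop :=
    Filter.tendsto_atTop_atTop.2 fun b => ⟨b * T, fun t ht => (Nat.le_div_iff_mul_le hT).2 ht⟩
  exact tendsto_of_tendsto_of_tendsto_of_le_of_le tendsto_const_nhds (hpow.comp hdiv)
    (fun t => zero_le) hbound


end
end

section
/- In the ARLOD model with learning rate α ∈ (0,1) and exploration rate ε ∈ (0,1) on a finite connected graph with N agents, suppose at time t0 agent i prefers opinion o and has a neighbour k who prefers opinion −o. Fix ξ ∈ (0,α) and let r = ⌈log(ξ)/log(1−α)⌉. Then the probability that agent i's preferred opinion has switched to −o by time t0 + 2r + 2 is at least (1−ε)^{r+1} ε^{r+1} (1/(N(N−1)))^{2r+2}, which is strictly positive. -/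
open MeasureTheory ProbabilityTheory

noncomputable section

lemma prefOf_eq_of_lt {q : Bool → ℝ} {o : Bool} (h : q (!o) < q o) : prefOf q = o := by
  cases o <;> simp [prefOf] at h ⊢ <;> linarith
lemma le_of_prefOf_eq {q : Bool → ℝ} {o : Bool} (h : prefOf q = o) : q (!o) ≤ q o := by
  cases o <;> simp [prefOf] at h ⊢ <;> [linarith; linarith]
lemma prefOf_or (q : Bool → ℝ) (o : Bool) : prefOf q = o ∨ prefOf q = !o := by
  cases o <;> cases h : prefOf q <;> simp
lemma arlodStep_eq {N : ℕ} (G : SimpleGraph (Fin N)) [DecidableRel G.Adj] (α : ℝ)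
    (q : Fin N → Bool → ℝ) {i j : Fin N} (e : Bool) (h : G.Adj i j)
    {ex : Bool} (hex : (if e then !(prefOf (q i)) else prefOf (q i)) = ex)
    {R : ℝ} (hR : (if ex = prefOf (q j) then (1:ℝ) else -1) = R) :
    arlodStep G α q i j e =
      fun v o => if v = i ∧ o = ex then (1 - α) * q i ex + α * R else q v o := by
  subst hex; subst hR; simp only [arlodStep, if_pos h]
lemma arlodStep_mem {N : ℕ} (G : SimpleGraph (Fin N)) [DecidableRel G.Adj] {α : ℝ}
    (hα : α ∈ Set.Ioo (0:ℝ) 1) (q : Fin N → Bool → ℝ) (i j : Fin N) (e : Bool)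
    (hb : ∀ v o', q v o' ∈ Set.Icc (-1:ℝ) 1) :
    ∀ v o', arlodStep G α q i j e v o' ∈ Set.Icc (-1:ℝ) 1 := by
  obtain ⟨hα0, hα1⟩ := hα
  intro v o'
  by_cases hadj : G.Adj i j
  · rw [arlodStep_eq G α q e hadj rfl rfl]
    dsimp only
    set ex := if e then !(prefOf (q i)) else prefOf (q i) with hex
    split
    · obtain ⟨h1, h2⟩ := hb i ex
      by_cases hR : ex = prefOf (q j)
      · rw [if_pos hR]; constructor <;> nlinarith
      · rw [if_neg hR]; constructor <;> nlinarith
    · exact hb v o'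
  · simp only [arlodStep, if_neg hadj]; exact hb v o'

lemma pairStep {N : ℕ} (G : SimpleGraph (Fin N)) [DecidableRel G.Adj] {α : ℝ}
    (hα : α ∈ Set.Ioo (0:ℝ) 1) {i k : Fin N} (hik : G.Adj i k) (o : Bool)
    (q : Fin N → Bool → ℝ) (hb : ∀ v o', q v o' ∈ Set.Icc (-1:ℝ) 1)
    (hk : q k o < q k (!o)) :
    (∀ v, v ≠ i → ∀ o', arlodStep G α (arlodStep G α q i k false) i k true v o' = q v o') ∧
    ((arlodStep G α (arlodStep G α q i k false) i k true i o = (1 - α) * q i o - α ∧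
      arlodStep G α (arlodStep G α q i k false) i k true i (!o) = (1 - α) * q i (!o) + α) ∨
     arlodStep G α (arlodStep G α q i k false) i k true i o
       < arlodStep G α (arlodStep G α q i k false) i k true i (!o)) := by
  obtain ⟨hα0, hα1⟩ := hα
  have hki : k ≠ i := hik.ne'
  have hone : (!o) ≠ o := by cases o <;> simp
  have hone' : o ≠ (!o) := by cases o <;> simp
  have hbo : ∀ b : Bool, b = o ∨ b = !o := by intro b; cases b <;> cases o <;> simp
  have hpk : prefOf (q k) = !o := prefOf_eq_of_lt (by rwa [Bool.not_not])
  set q1 := arlodStep G α q i k false with hq1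
  set q2 := arlodStep G α q1 i k true with hq2
  have hb1 : ∀ v o', q1 v o' ∈ Set.Icc (-1:ℝ) 1 :=
    arlodStep_mem G ⟨hα0, hα1⟩ q i k false hb
  rcases prefOf_or (q i) o with hp | hp
  · -- agent i prefers o at the start
    have e1 : q1 = fun v o' => if v = i ∧ o' = o then (1 - α) * q i o + α * (-1)
        else q v o' := by
      rw [hq1]
      exact arlodStep_eq G α q false hik (by simpa using hp)
        (by rw [hpk, if_neg hone'])
    have h1o : q1 i o = (1 - α) * q i o - α := by rw [e1]; simp; ring
    have h1no : q1 i (!o) = q i (!o) := by rw [e1]; simp [hone]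
    have h1ne : ∀ v, v ≠ i → ∀ o', q1 v o' = q v o' := by
      intro v hv o'; rw [e1]; simp [hv]
    have h1k : q1 k = q k := funext (h1ne k hki)
    have hpk1 : prefOf (q1 k) = !o := by rw [h1k]; exact hpk
    rcases prefOf_or (q1 i) o with hp1 | hp1
    · -- still prefers o: explore step rewards !o
      have e2 : q2 = fun v o' => if v = i ∧ o' = !o then (1 - α) * q1 i (!o) + α * 1
          else q1 v o' := by
        rw [hq2]
        exact arlodStep_eq G α q1 true hik (by simpa using hp1)
          (by rw [hpk1, if_pos rfl])
      have h2o : q2 i o = q1 i o := by rw [e2]; simp [hone']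
      have h2no : q2 i (!o) = (1 - α) * q i (!o) + α := by
        rw [e2]; simp [h1no]
      refine ⟨?_, Or.inl ⟨by rw [h2o, h1o], h2no⟩⟩
      intro v hv o'
      rw [e2]; simp [hv, h1ne v hv o']
    · -- flipped after first step: explore expresses o, reward -1
      have e2 : q2 = fun v o' => if v = i ∧ o' = o then (1 - α) * q1 i o + α * (-1)
          else q1 v o' := by
        rw [hq2]
        exact arlodStep_eq G α q1 true hik (by simp [hp1, Bool.not_not])
          (by rw [hpk1, if_neg hone'])
      have h2o : q2 i o = (1 - α) * q1 i o - α := by rw [e2]; simp; ring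
      have h2no : q2 i (!o) = q i (!o) := by rw [e2]; simp [hone, h1no]
      have hle : q1 i o ≤ q i (!o) := by
        have := le_of_prefOf_eq (o := !o) hp1
        rwa [Bool.not_not, h1no] at this
      have key : -1 < q1 i o ∨ q1 i o < q i (!o) := by
        by_contra hcon
        push_neg at hcon
        obtain ⟨hc1, hc2⟩ := hcon
        have hx : q1 i o = -1 := le_antisymm hc1 (hb1 i o).1
        have hxno : q i (!o) = -1 := le_antisymm (by linarith [hle, hx]) (hb i (!o)).1
        have hqio : q i o = -1 := by
          have := h1o; rw [hx] at this; nlinarith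
        have hfe : q1 i = q i := by
          funext b
          rcases hbo b with rfl | rfl
          · rw [hx, hqio]
          · rw [h1no]
        rw [hfe, hp] at hp1
        exact hone' hp1
      have hge : -1 ≤ q1 i o := (hb1 i o).1
      refine ⟨?_, Or.inr ?_⟩
      · intro v hv o'
        rw [e2]; simp [hv, h1ne v hv o']
      · rw [h2o, h2no]
        rcases key with h | h
        · nlinarith
        · nlinarith
  · -- agent i prefers !o at the start: exploit step rewards !o
    have e1 : q1 = fun v o' => if v = i ∧ o' = !o then (1 - α) * q i (!o) + α * 1
        else q v o' := by
      rw [hq1]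
      exact arlodStep_eq G α q false hik (by simpa using hp)
        (by rw [hpk, if_pos rfl])
    have h1o : q1 i o = q i o := by rw [e1]; simp [hone']
    have h1no : q1 i (!o) = (1 - α) * q i (!o) + α := by rw [e1]; simp
    have h1ne : ∀ v, v ≠ i → ∀ o', q1 v o' = q v o' := by
      intro v hv o'; rw [e1]; simp [hv]
    have h1k : q1 k = q k := funext (h1ne k hki)
    have hpk1 : prefOf (q1 k) = !o := by rw [h1k]; exact hpk
    rcases prefOf_or (q1 i) o with hp1 | hp1
    · -- would mean preference jumped back to o: impossible unless everything is 1
      exfalso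
      have hA : q i o ≤ q i (!o) := by
        have := le_of_prefOf_eq (o := !o) hp
        rwa [Bool.not_not] at this
      have hB : q1 i (!o) ≤ q1 i o := le_of_prefOf_eq hp1
      rw [h1o, h1no] at hB
      have hble : q i (!o) ≤ 1 := (hb i (!o)).2
      have hb1' : q i (!o) = 1 := by nlinarith
      have hio1 : q i o = 1 := by nlinarith
      have hfe : q1 i = q i := by
        funext b
        rcases hbo b with rfl | rfl
        · rw [h1o]
        · rw [h1no, hb1']; ring
      rw [hfe, hp] at hp1
      exact hone hp1
    · -- still prefers !o: explore expresses o, reward -1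
      have e2 : q2 = fun v o' => if v = i ∧ o' = o then (1 - α) * q1 i o + α * (-1)
          else q1 v o' := by
        rw [hq2]
        exact arlodStep_eq G α q1 true hik (by simp [hp1, Bool.not_not])
          (by rw [hpk1, if_neg hone'])
      have h2o : q2 i o = (1 - α) * q i o - α := by rw [e2]; simp [h1o]; ring
      have h2no : q2 i (!o) = (1 - α) * q i (!o) + α := by rw [e2]; simp [hone, h1no]
      refine ⟨?_, Or.inl ⟨h2o, h2no⟩⟩
      intro v hv o'
      rw [e2]; simp [hv, h1ne v hv o']

lemma detLemma {N : ℕ} (G : SimpleGraph (Fin N)) [DecidableRel G.Adj] {α : ℝ}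
    (hα : α ∈ Set.Ioo (0:ℝ) 1) {i k : Fin N} (hik : G.Adj i k) (o : Bool)
    (q : ℕ → Fin N → Bool → ℝ)
    (hb : ∀ m v o', q m v o' ∈ Set.Icc (-1:ℝ) 1)
    (r : ℕ)
    (hstep : ∀ s, s < 2 * r + 2 → q (s + 1) = arlodStep G α (q s) i k (decide (s % 2 = 1)))
    (h0k : q 0 k o < q 0 k (!o))
    (hsmall : (1 - α) ^ (r + 1) < 1 / 2) :
    q (2 * r + 2) i o < q (2 * r + 2) i (!o) := by
  obtain ⟨hα0, hα1⟩ := hα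
  have hki : k ≠ i := hik.ne'
  have key : ∀ m, m ≤ r + 1 → q (2 * m) k = q 0 k ∧
      ((q (2 * m) i o ≤ 2 * (1 - α) ^ m - 1 ∧ 1 - 2 * (1 - α) ^ m ≤ q (2 * m) i (!o)) ∨
       q (2 * m) i o < q (2 * m) i (!o)) := by
    intro m
    induction m with
    | zero =>
      intro _
      refine ⟨rfl, Or.inl ⟨?_, ?_⟩⟩
      · have := (hb 0 i o).2; norm_num; linarith
      · have := (hb 0 i (!o)).1; norm_num; linarith
    | succ n ih =>
      intro hm
      obtain ⟨hkeq, hbr⟩ := ih (by omega)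
      have hs1 : q (2 * n + 1) = arlodStep G α (q (2 * n)) i k false := by
        have h := hstep (2 * n) (by omega)
        simpa [Nat.mul_mod_right] using h
      have hs2 : q (2 * n + 2) = arlodStep G α (arlodStep G α (q (2 * n)) i k false) i k true := by
        have h := hstep (2 * n + 1) (by omega)
        rw [hs1] at h
        have hdec : ((2 * n + 1) % 2 = 1) := by omega
        simpa [hdec] using h
      have hkk : q (2 * n) k o < q (2 * n) k (!o) := by rw [hkeq]; exact h0k
      obtain ⟨hne, hcase⟩ := pairStep G ⟨hα0, hα1⟩ hik o (q (2 * n)) (hb (2 * n)) hkk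
      have hidx : 2 * (n + 1) = 2 * n + 2 := by ring
      rw [hidx, hs2]
      constructor
      · rw [funext (hne k hki)]; exact hkeq
      · have hpow : (1 - α) ^ (n + 1) = (1 - α) ^ n * (1 - α) := pow_succ _ _
        have hβ0 : (0:ℝ) ≤ 1 - α := by linarith
        rcases hbr with ⟨hA, hB⟩ | hflip
        · rcases hcase with ⟨hEo, hEno⟩ | hfl
          · left
            constructor
            · rw [hEo]; nlinarith
            · rw [hEno]; nlinarith
          · exact Or.inr hfl
        · rcases hcase with ⟨hEo, hEno⟩ | hfl
          · right
            rw [hEo, hEno]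
            nlinarith
          · exact Or.inr hfl
  obtain ⟨_, hbr⟩ := key (r + 1) le_rfl
  have hidx : 2 * (r + 1) = 2 * r + 2 := by ring
  rw [hidx] at hbr
  rcases hbr with ⟨hA, hB⟩ | hflip
  · linarith
  · exact hflip

def arlodTraj {N : ℕ} (G : SimpleGraph (Fin N)) [DecidableRel G.Adj] (α : ℝ)
    (q0 : Fin N → Bool → ℝ) (f : ℕ → Fin N × Fin N × Bool) : ℕ → Fin N → Bool → ℝ
  | 0 => q0
  | t + 1 => arlodStep G α (arlodTraj G α q0 f t) (f t).1 (f t).2.1 (f t).2.2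

lemma arlodTraj_congr {N : ℕ} (G : SimpleGraph (Fin N)) [DecidableRel G.Adj] (α : ℝ)
    (q0 : Fin N → Bool → ℝ) (f g : ℕ → Fin N × Fin N × Bool) (t : ℕ)
    (h : ∀ s, s < t → f s = g s) :
    arlodTraj G α q0 f t = arlodTraj G α q0 g t := by
  induction t with
  | zero => rfl
  | succ n ih =>
    show arlodStep G α (arlodTraj G α q0 f n) (f n).1 (f n).2.1 (f n).2.2 =
      arlodStep G α (arlodTraj G α q0 g n) (g n).1 (g n).2.1 (g n).2.2
    rw [ih (fun s hs => h s (by omega)), h n (by omega)]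

lemma prod_parity (x y : ℝ) (n : ℕ) :
    (∏ s ∈ Finset.range (2 * n), (if decide (s % 2 = 1) then x else y)) = (y * x) ^ n := by
  induction n with
  | zero => simp
  | succ m ih =>
    have hidx : 2 * (m + 1) = (2 * m + 1) + 1 := by ring
    rw [hidx, Finset.prod_range_succ, Finset.prod_range_succ, ih]
    have h1 : ((2 * m + 1) % 2 = 1) := by omega
    have h2 : ¬ ((2 * m) % 2 = 1) := by omega
    simp [h1, h2]
    ring

/-- In the ARLOD model with learning rate `α ∈ (0,1)` and exploration rate
`ε ∈ (0,1)` on a finite connected graph with `N` agents, suppose at time `t0` agent `i`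
prefers opinion `o` and has a neighbour `k` who prefers opinion `−o` (an event `E0`).
Fix `ξ ∈ (0,α)` and let `r = ⌈log(ξ)/log(1−α)⌉`. Then the probability that agent `i`'s
preferred opinion has switched to `−o` by time `t0 + 2r + 2` (together with `E0`) is at
least `(1−ε)^{r+1} ε^{r+1} (1/(N(N−1)))^{2r+2} · P(E0)`, and this factor is strictly
positive. -/
theorem stmt11 {N : ℕ} (hN : 0 < N) (G : SimpleGraph (Fin N)) [DecidableRel G.Adj]
    (hG : G.Connected) (α ε : ℝ) (hα : α ∈ Set.Ioo (0 : ℝ) 1) (hε : ε ∈ Set.Ioo (0 : ℝ) 1)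
    {Ω : Type*} [MeasurableSpace Ω] (P : Measure Ω) [IsProbabilityMeasure P]
    (A J : ℕ → Ω → Fin N) (X : ℕ → Ω → Bool)
    (hmeas : ∀ t : ℕ, Measurable (fun ω => (A t ω, J t ω, X t ω)))
    (hindep : iIndepFun (fun t ω => (A t ω, J t ω, X t ω)) P)
    (hlaw : ∀ (t : ℕ) (i j : Fin N) (e : Bool),
      P {ω | (A t ω, J t ω, X t ω) = (i, j, e)} =
        ENNReal.ofReal ((1 / (N : ℝ)) * (if G.Adj i j then 1 / (G.degree i : ℝ) else 0) *
          (if e then ε else 1 - ε)))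
    (Q : ℕ → Ω → Fin N → Bool → ℝ) (q0 : Fin N → Bool → ℝ)
    (hQ0 : ∀ ω, Q 0 ω = q0) (hq0mem : ∀ i o, q0 i o ∈ Set.Icc (-1 : ℝ) 1)
    (hdyn : ∀ (t : ℕ) (ω : Ω),
      Q (t + 1) ω = arlodStep G α (Q t ω) (A t ω) (J t ω) (X t ω))
    (t0 : ℕ) (i k : Fin N) (hik : G.Adj i k) (o : Bool) (ξ : ℝ) (hξ : ξ ∈ Set.Ioo 0 α)
    (r : ℕ) (hr : r = (⌈Real.log ξ / Real.log (1 - α)⌉).toNat) :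
    ENNReal.ofReal ((1 - ε) ^ (r + 1) * ε ^ (r + 1) *
        (1 / ((N : ℝ) * ((N : ℝ) - 1))) ^ (2 * r + 2)) *
      P {ω | Q t0 ω i (!o) < Q t0 ω i o ∧ Q t0 ω k o < Q t0 ω k (!o)} ≤
      P ({ω | Q (t0 + 2 * r + 2) ω i o < Q (t0 + 2 * r + 2) ω i (!o)} ∩
        {ω | Q t0 ω i (!o) < Q t0 ω i o ∧ Q t0 ω k o < Q t0 ω k (!o)}) ∧
      0 < (1 - ε) ^ (r + 1) * ε ^ (r + 1) * (1 / ((N : ℝ) * ((N : ℝ) - 1))) ^ (2 * r + 2) := by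
  obtain ⟨hα0, hα1⟩ := hα
  obtain ⟨hε0, hε1⟩ := hε
  obtain ⟨hξ0, hξα⟩ := hξ
  have hik' : i ≠ k := hik.ne
  have hN2 : 2 ≤ N := by
    have h := Fintype.one_lt_card_iff_nontrivial.mpr ⟨⟨i, k, hik'⟩⟩
    simp at h; omega
  have hNR : (2:ℝ) ≤ (N:ℝ) := by exact_mod_cast hN2
  have hdegpos : 0 < G.degree i := by
    rw [G.degree_pos_iff_exists_adj]; exact ⟨k, hik⟩
  have hdegposR : (0:ℝ) < (G.degree i : ℝ) := by exact_mod_cast hdegpos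
  have hdegle : (G.degree i : ℝ) ≤ (N:ℝ) - 1 := by
    have h : G.degree i < N := by simpa using G.degree_lt_card_verts i
    have h' : G.degree i + 1 ≤ N := h
    have : ((G.degree i : ℝ) + 1) ≤ (N:ℝ) := by exact_mod_cast h'
    linarith
  have hNN1 : (0:ℝ) < (N:ℝ) * ((N:ℝ) - 1) := by nlinarith
  have hcpos : 0 < (1 - ε) ^ (r + 1) * ε ^ (r + 1) *
      (1 / ((N : ℝ) * ((N : ℝ) - 1))) ^ (2 * r + 2) := by
    apply mul_pos (mul_pos (pow_pos (by linarith) _) (pow_pos hε0 _))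
    exact pow_pos (by positivity) _
  refine ⟨?_, hcpos⟩
  -- (1-α)^(r+1) < 1/2
  have hβ0 : (0:ℝ) < 1 - α := by linarith
  have hlogβ : Real.log (1 - α) < 0 := Real.log_neg hβ0 (by linarith)
  have hxr : Real.log ξ / Real.log (1 - α) ≤ (r:ℝ) := by
    rw [hr]
    have h1 : Real.log ξ / Real.log (1 - α) ≤ (⌈Real.log ξ / Real.log (1 - α)⌉ : ℝ) :=
      Int.le_ceil _
    have h2 : ((⌈Real.log ξ / Real.log (1 - α)⌉ : ℤ) : ℝ) ≤
        ((⌈Real.log ξ / Real.log (1 - α)⌉.toNat : ℤ) : ℝ) := by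
      exact_mod_cast Int.self_le_toNat _
    push_cast at h2 ⊢
    linarith
  have hβr : (1 - α) ^ r ≤ ξ := by
    have hlog : Real.log ((1 - α) ^ r) ≤ Real.log ξ := by
      rw [Real.log_pow]
      have h := mul_le_mul_of_nonpos_right hxr (le_of_lt hlogβ)
      rw [div_mul_cancel₀ _ (ne_of_lt hlogβ)] at h
      exact_mod_cast h
    exact (Real.log_le_log_iff (pow_pos hβ0 r) hξ0).mp hlog
  have hsmall : (1 - α) ^ (r + 1) < 1 / 2 := by
    have hp : (1 - α) ^ (r + 1) = (1 - α) ^ r * (1 - α) := pow_succ _ _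
    nlinarith [pow_nonneg hβ0.le r, pow_pos hβ0 r]
  -- bounded Q values
  have hQb : ∀ t (ω : Ω) v o', Q t ω v o' ∈ Set.Icc (-1:ℝ) 1 := by
    intro t
    induction t with
    | zero => intro ω v o'; rw [hQ0]; exact hq0mem v o'
    | succ n ih =>
      intro ω v o'
      rw [hdyn]
      exact arlodStep_mem G ⟨hα0, hα1⟩ _ _ _ _ (ih ω) v o'
  set trip : ℕ → Ω → Fin N × Fin N × Bool := fun t ω => (A t ω, J t ω, X t ω) with htrip
  have hQtraj : ∀ t (ω : Ω), Q t ω = arlodTraj G α q0 (fun s => trip s ω) t := by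
    intro t
    induction t with
    | zero => intro ω; rw [hQ0]; rfl
    | succ n ih =>
      intro ω
      rw [hdyn, ih ω]
      rfl
  set es : ℕ → Bool := fun s => decide (s % 2 = 1) with hes
  set E0 : Set Ω := {ω | Q t0 ω i (!o) < Q t0 ω i o ∧ Q t0 ω k o < Q t0 ω k (!o)} with hE0
  set tgt : Set Ω :=
    {ω | Q (t0 + 2 * r + 2) ω i o < Q (t0 + 2 * r + 2) ω i (!o)} with htgt
  set Mev : Set Ω :=
    ⋂ s ∈ Finset.range (2 * r + 2), trip (t0 + s) ⁻¹' {(i, k, es s)} with hMev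
  -- deterministic inclusion
  have hincl : Mev ∩ E0 ⊆ tgt ∩ E0 := by
    rintro ω ⟨hωM, hωE⟩
    refine ⟨?_, hωE⟩
    simp only [hMev, Set.mem_iInter, Set.mem_preimage, Set.mem_singleton_iff,
      Finset.mem_range] at hωM
    have hstep' : ∀ s, s < 2 * r + 2 →
        Q (t0 + s + 1) ω = arlodStep G α (Q (t0 + s) ω) i k (es s) := by
      intro s hs
      have ht := hωM s hs
      have hA' : A (t0 + s) ω = i := congrArg Prod.fst ht
      have hJ' : J (t0 + s) ω = k := congrArg (fun p => p.2.1) ht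
      have hX' : X (t0 + s) ω = es s := congrArg (fun p => p.2.2) ht
      rw [hdyn (t0 + s) ω, hA', hJ', hX']
    obtain ⟨hωE1, hωE2⟩ := hωE
    have hdet := detLemma G ⟨hα0, hα1⟩ hik o (fun m => Q (t0 + m) ω)
      (fun m v o' => hQb (t0 + m) ω v o') r
      (fun s hs => by
        have h := hstep' s hs
        simpa [Nat.add_assoc] using h)
      (by simpa using hωE2) hsmall
    show Q (t0 + 2 * r + 2) ω i o < Q (t0 + 2 * r + 2) ω i (!o)
    have hidx : t0 + 2 * r + 2 = t0 + (2 * r + 2) := by omega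
    rw [hidx]
    exact hdet
  -- independence of M and E0
  set S : Finset ℕ := (Finset.range (2 * r + 2)).image (fun s => t0 + s) with hS
  set T : Finset ℕ := Finset.range t0 with hT
  have hST : Disjoint S T := by
    rw [Finset.disjoint_left]
    intro a haS haT
    simp only [hS, Finset.mem_image, Finset.mem_range] at haS
    simp only [hT, Finset.mem_range] at haT
    omega
  have hindepF := hindep.indepFun_finset S T hST hmeas
  set BS : Set (↥S → Fin N × Fin N × Bool) :=
    {v | ∀ j : ↥S, v j = (i, k, es ((j : ℕ) - t0))} with hBS
  set BT : Set (↥T → Fin N × Fin N × Bool) :=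
    {v | (arlodTraj G α q0 (fun s => if h : s ∈ T then v ⟨s, h⟩ else (i, k, false)) t0) i (!o) <
        (arlodTraj G α q0 (fun s => if h : s ∈ T then v ⟨s, h⟩ else (i, k, false)) t0) i o ∧
      (arlodTraj G α q0 (fun s => if h : s ∈ T then v ⟨s, h⟩ else (i, k, false)) t0) k o <
        (arlodTraj G α q0 (fun s => if h : s ∈ T then v ⟨s, h⟩ else (i, k, false)) t0) k (!o)}
    with hBT
  have hMeq : Mev = (fun ω (j : ↥S) => trip (j : ℕ) ω) ⁻¹' BS := by
    ext ω
    simp only [hMev, Set.mem_iInter, Set.mem_preimage, Set.mem_singleton_iff,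
      Finset.mem_range, hBS, Set.mem_setOf_eq]
    constructor
    · intro h j
      obtain ⟨s, hs, hjs⟩ : ∃ s, s < 2 * r + 2 ∧ (j : ℕ) = t0 + s := by
        have hj := j.2
        simp only [hS, Finset.mem_image, Finset.mem_range] at hj
        obtain ⟨s, hs, h'⟩ := hj
        exact ⟨s, hs, h'.symm⟩
      have := h s hs
      simp only [hjs]
      simpa [Nat.add_sub_cancel_left] using this
    · intro h s hs
      have hmem : t0 + s ∈ S := by
        simp only [hS, Finset.mem_image, Finset.mem_range]
        exact ⟨s, hs, rfl⟩
      have := h ⟨t0 + s, hmem⟩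
      simpa [Nat.add_sub_cancel_left] using this
  have hE0eq : E0 = (fun ω (j : ↥T) => trip (j : ℕ) ω) ⁻¹' BT := by
    ext ω
    simp only [hE0, Set.mem_setOf_eq, Set.mem_preimage, hBT]
    have hcong : arlodTraj G α q0
        (fun s => if h : s ∈ T then trip s ω else (i, k, false)) t0 = Q t0 ω := by
      rw [hQtraj t0 ω]
      apply arlodTraj_congr
      intro s hs
      rw [dif_pos (by simp [hT]; omega : s ∈ T)]
    rw [hcong]
  have hmsS : ∀ s : Set (↥S → Fin N × Fin N × Bool), MeasurableSet s := fun s =>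
    s.to_countable.measurableSet
  have hmsT : ∀ s : Set (↥T → Fin N × Fin N × Bool), MeasurableSet s := fun s =>
    s.to_countable.measurableSet
  have hPME : P (Mev ∩ E0) = P Mev * P E0 := by
    rw [hMeq, hE0eq]
    exact hindepF.measure_inter_preimage_eq_mul BS BT (hmsS BS) (hmsT BT)
  -- computing P Mev
  have hMev2 : Mev = ⋂ t ∈ S, trip t ⁻¹' {(i, k, es (t - t0))} := by
    rw [hMev]
    ext ω
    simp only [Set.mem_iInter, Set.mem_preimage, Set.mem_singleton_iff, Finset.mem_range,
      hS, Finset.mem_image]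
    constructor
    · rintro h t ⟨s, hs, rfl⟩
      simpa [Nat.add_sub_cancel_left] using h s hs
    · intro h s hs
      have := h (t0 + s) ⟨s, hs, rfl⟩
      simpa [Nat.add_sub_cancel_left] using this
  have hPM : P Mev = ∏ s ∈ Finset.range (2 * r + 2), P (trip (t0 + s) ⁻¹' {(i, k, es s)}) := by
    rw [hMev2]
    rw [hindep.measure_inter_preimage_eq_mul (S := S)
      (sets := fun t => {(i, k, es (t - t0))}) (fun t _ => measurableSet_singleton _)]
    rw [hS, Finset.prod_image (by intro a _ b _ h; simp only at h; omega)]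
    apply Finset.prod_congr rfl
    intro s _
    simp [Nat.add_sub_cancel_left]
  have hfac : ∀ s : ℕ, P (trip (t0 + s) ⁻¹' {(i, k, es s)}) =
      ENNReal.ofReal ((1 / (N : ℝ)) * (1 / (G.degree i : ℝ)) *
        (if es s then ε else 1 - ε)) := by
    intro s
    have hpre : trip (t0 + s) ⁻¹' {(i, k, es s)} =
        {ω | (A (t0 + s) ω, J (t0 + s) ω, X (t0 + s) ω) = (i, k, es s)} := rfl
    rw [hpre, hlaw (t0 + s) i k (es s), if_pos hik]
  set cBig : ℝ := ((1 / (N : ℝ)) * (1 / (G.degree i : ℝ))) ^ (2 * r + 2) *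
    ((1 - ε) * ε) ^ (r + 1) with hcBig
  have hPMval : P Mev = ENNReal.ofReal cBig := by
    rw [hPM]
    have h1 : ∀ s ∈ Finset.range (2 * r + 2),
        P (trip (t0 + s) ⁻¹' {(i, k, es s)}) =
        ENNReal.ofReal ((1 / (N : ℝ)) * (1 / (G.degree i : ℝ)) *
          (if es s then ε else 1 - ε)) := fun s _ => hfac s
    rw [Finset.prod_congr rfl h1]
    rw [← ENNReal.ofReal_prod_of_nonneg (by
      intro s _
      have : (0:ℝ) ≤ (if es s then ε else 1 - ε) := by
        split <;> linarith
      positivity)]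
    congr 1
    rw [Finset.prod_mul_distrib, Finset.prod_const, Finset.card_range]
    have h2 : (∏ s ∈ Finset.range (2 * r + 2), (if es s then ε else 1 - ε)) =
        ((1 - ε) * ε) ^ (r + 1) := by
      have := prod_parity ε (1 - ε) (r + 1)
      rw [show 2 * (r + 1) = 2 * r + 2 by ring] at this
      exact this
    rw [h2, hcBig]
  -- final comparison
  have hle : (1 - ε) ^ (r + 1) * ε ^ (r + 1) *
      (1 / ((N : ℝ) * ((N : ℝ) - 1))) ^ (2 * r + 2) ≤ cBig := by
    have hform : cBig = (1 - ε) ^ (r + 1) * ε ^ (r + 1) *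
        (1 / ((N : ℝ) * (G.degree i : ℝ))) ^ (2 * r + 2) := by
      rw [hcBig]
      simp only [one_div, mul_inv, mul_pow]
      ring
    rw [hform]
    have hbase : 1 / ((N : ℝ) * ((N : ℝ) - 1)) ≤ 1 / ((N : ℝ) * (G.degree i : ℝ)) := by
      apply one_div_le_one_div_of_le
      · nlinarith
      · nlinarith
    have hbase0 : (0:ℝ) ≤ 1 / ((N : ℝ) * ((N : ℝ) - 1)) := (one_div_pos.mpr hNN1).le
    have h1 : 0 ≤ (1 - ε) ^ (r + 1) * ε ^ (r + 1) :=
      mul_nonneg (pow_nonneg (by linarith) _) (pow_nonneg hε0.le _)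
    exact mul_le_mul_of_nonneg_left (pow_le_pow_left₀ hbase0 hbase _) h1
  calc ENNReal.ofReal ((1 - ε) ^ (r + 1) * ε ^ (r + 1) *
        (1 / ((N : ℝ) * ((N : ℝ) - 1))) ^ (2 * r + 2)) * P E0
      ≤ ENNReal.ofReal cBig * P E0 :=
        mul_le_mul_left (ENNReal.ofReal_le_ofReal hle) _
    _ = P Mev * P E0 := by rw [hPMval]
    _ = P (Mev ∩ E0) := hPME.symm
    _ ≤ P (tgt ∩ E0) := measure_mono hincl

end
end
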